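/- For every t ∈ (0,T) the function φ is twice differentiable at t and |φ″(t)| ≤ (5/2) · T² · φ(t)³. (Bound on the second time derivative of the Carleman weight φ, from the paper's estimate (2.301), with explicit constant C = 5/2.) -/

import Mathlib

/-- The Carleman weight `φ(t) = exp(μ c)/(t (T − t))` is twice differentiable on `(0,T)`
with `|φ″(t)| ≤ (5/2) · T² · φ(t)³` (paper's estimate (2.301) with `C = 5/2`). -/
theorem carleman_weight_phi_second_deriv_bound
    (T μ lam M c : ℝ) (hT : 0 < T) (hμ : 1 ≤ μ) (hlam : 1 ≤ lam)
    (hM : 0 < M) (hc0 : 0 ≤ c) (hcM : c ≤ M)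
    (φ : ℝ → ℝ) (hφ : ∀ t, φ t = Real.exp (μ * c) / (t * (T - t))) :
    ∀ t ∈ Set.Ioo (0 : ℝ) T,
      DifferentiableAt ℝ φ t ∧ DifferentiableAt ℝ (deriv φ) t ∧
        |deriv (deriv φ) t| ≤ (5 / 2) * T ^ 2 * (φ t) ^ 3 := by
  have hfun : φ = fun s => Real.exp (μ * c) / (s * (T - s)) := funext hφ
  subst hfun
  set E := Real.exp (μ * c) with hE
  have hEpos : 0 < E := Real.exp_pos _
  have hE1 : 1 ≤ E := Real.one_le_exp (mul_nonneg (by linarith) hc0)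
  intro t ht
  obtain ⟨ht0, htT⟩ := ht
  have hgt : 0 < t * (T - t) := mul_pos ht0 (sub_pos.2 htT)
  have hgne : t * (T - t) ≠ 0 := ne_of_gt hgt
  -- derivative of g s = s (T - s)
  have hg : ∀ s : ℝ, HasDerivAt (fun u : ℝ => u * (T - u)) (T - 2 * s) s := by
    intro s
    have h := (hasDerivAt_id s).mul ((hasDerivAt_const s T).sub (hasDerivAt_id s))
    refine HasDerivAt.congr_deriv h ?_
    simp [id_eq]; ring
  -- first derivative formula
  have hφ' : ∀ s : ℝ, s * (T - s) ≠ 0 →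
      HasDerivAt (fun u : ℝ => E / (u * (T - u)))
        (-(E * (T - 2 * s)) / (s * (T - s)) ^ 2) s := by
    intro s hs
    have h := (hasDerivAt_const s E).div (hg s) hs
    refine HasDerivAt.congr_deriv h ?_
    ring
  have hd1 := hφ' t hgne
  have hmem : Set.Ioo (0 : ℝ) T ∈ nhds t := isOpen_Ioo.mem_nhds ⟨ht0, htT⟩
  have heq : deriv (fun u : ℝ => E / (u * (T - u))) =ᶠ[nhds t]
      fun s : ℝ => -(E * (T - 2 * s)) / (s * (T - s)) ^ 2 := by
    filter_upwards [hmem] with s hs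
    exact (hφ' s (ne_of_gt (mul_pos hs.1 (sub_pos.2 hs.2)))).deriv
  -- second derivative
  have hnum : HasDerivAt (fun s : ℝ => -(E * (T - 2 * s))) (2 * E) t := by
    have h1 : HasDerivAt (fun s : ℝ => T - 2 * s) (-2 : ℝ) t := by
      exact ((hasDerivAt_const t T).sub ((hasDerivAt_id t).const_mul 2)).congr_deriv (by simp)
    have h2 := (h1.const_mul E).neg
    refine HasDerivAt.congr_deriv h2 ?_
    ring
  have hden : HasDerivAt (fun s : ℝ => (s * (T - s)) ^ 2)
      (2 * (t * (T - t)) ^ 1 * (T - 2 * t)) t := (hg t).pow 2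
  have hdenne : (t * (T - t)) ^ 2 ≠ 0 := pow_ne_zero 2 hgne
  have hd2 := hnum.div hden hdenne
  refine ⟨hd1.differentiableAt,
    (Filter.EventuallyEq.differentiableAt_iff heq).2 hd2.differentiableAt, ?_⟩
  have hderiv2 : deriv (deriv (fun u : ℝ => E / (u * (T - u)))) t =
      (2 * E * (t * (T - t)) ^ 2 -
        -(E * (T - 2 * t)) * (2 * (t * (T - t)) ^ 1 * (T - 2 * t))) /
        ((t * (T - t)) ^ 2) ^ 2 := by
    rw [Filter.EventuallyEq.deriv_eq heq]
    exact hd2.deriv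
  rw [hderiv2]
  have hval : (2 * E * (t * (T - t)) ^ 2 -
        -(E * (T - 2 * t)) * (2 * (t * (T - t)) ^ 1 * (T - 2 * t))) /
        ((t * (T - t)) ^ 2) ^ 2 =
      E * (2 * (t * (T - t)) + 2 * (T - 2 * t) ^ 2) / (t * (T - t)) ^ 3 := by
    field_simp
    ring
  rw [hval]
  have hg3 : 0 < (t * (T - t)) ^ 3 := pow_pos hgt 3
  rw [abs_of_nonneg (by positivity)]
  have hkey : 2 * (t * (T - t)) + 2 * (T - 2 * t) ^ 2 ≤ 5 / 2 * T ^ 2 := by nlinarith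
  have hE3 : E ≤ E ^ 3 := le_self_pow₀ hE1 (by norm_num)
  have h1 : E * (2 * (t * (T - t)) + 2 * (T - 2 * t) ^ 2) ≤ E * (5 / 2 * T ^ 2) :=
    mul_le_mul_of_nonneg_left hkey hEpos.le
  have h2 : 5 / 2 * T ^ 2 * E ≤ 5 / 2 * T ^ 2 * E ^ 3 :=
    mul_le_mul_of_nonneg_left hE3 (by positivity)
  have hnumle : E * (2 * (t * (T - t)) + 2 * (T - 2 * t) ^ 2) ≤ 5 / 2 * T ^ 2 * E ^ 3 := by
    nlinarith
  calc E * (2 * (t * (T - t)) + 2 * (T - 2 * t) ^ 2) / (t * (T - t)) ^ 3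
      ≤ 5 / 2 * T ^ 2 * E ^ 3 / (t * (T - t)) ^ 3 := by gcongr
    _ = 5 / 2 * T ^ 2 * (E / (t * (T - t))) ^ 3 := by
        rw [div_pow]; ring
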